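/- For Borel functions w_k, w : [0,T] → ℝ^l (k ∈ ℕ), the pseudo-paths of w_k converge weakly to the pseudo-path of w (i.e., ∫ φ dΨ(w_k) → ∫ φ dΨ(w) for every bounded continuous φ : [0,T]×ℝ^l → ℝ) if and only if w_k converges to w in λ-measure (i.e., for every δ > 0, λ{ t ∈ [0,T] : |w_k(t) − w(t)| > δ } → 0 as k → ∞). (Lemma 6 of the paper: the pseudo-path (Meyer–Zheng) topology is equivalent to convergence in measure.) -/

import Mathlib

open Set Filter MeasureTheory Topology
open scoped ENNReal NNReal

noncomputable section

/-- `ℝˡ` as a real inner product space. -/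
abbrev Vec (l : ℕ) := EuclideanSpace ℝ (Fin l)

/-- The measure `λ(dt) = e^{−t} dt` on `[0, T]`. -/
def lamMeas (T : ℝ) : Measure ℝ :=
  (volume.restrict (Icc 0 T)).withDensity (fun t => ENNReal.ofReal (Real.exp (-t)))

/-- The pseudo-path of a Borel function `w : [0,T] → ℝˡ`: the pushforward of `λ` under
`t ↦ (t, w(t))`, a finite Borel measure on `[0,T] × ℝˡ`. -/
def pseudoPath {l : ℕ} (T : ℝ) (w : ℝ → Vec l) : Measure (ℝ × Vec l) :=
  Measure.map (fun t => (t, w t)) (lamMeas T)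

instance lamMeas_finite (T : ℝ) : IsFiniteMeasure (lamMeas T) := by
  constructor
  rw [lamMeas, withDensity_apply _ MeasurableSet.univ, Measure.restrict_univ]
  calc ∫⁻ t in Icc 0 T, ENNReal.ofReal (Real.exp (-t)) ∂volume
      ≤ ∫⁻ _ in Icc 0 T, 1 ∂volume := by
        refine setLIntegral_mono measurable_const fun t ht => ?_
        refine ENNReal.ofReal_le_one.2 ?_
        have : Real.exp (-t) ≤ Real.exp 0 := Real.exp_le_exp.2 (by linarith [ht.1])
        simpa using this
    _ = volume (Icc 0 T) := setLIntegral_one _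
    _ < ⊤ := by simp [Real.volume_Icc]

lemma integral_pseudoPath {l : ℕ} (T : ℝ) {w : ℝ → Vec l} (hw : Measurable w)
    (φ : BoundedContinuousFunction (ℝ × Vec l) ℝ) :
    ∫ p, φ p ∂(pseudoPath T w) = ∫ t, φ (t, w t) ∂(lamMeas T) := by
  rw [pseudoPath, integral_map (show Measurable fun t : ℝ => (t, w t) from measurable_id.prodMk hw).aemeasurable
    φ.continuous.aestronglyMeasurable]

lemma min1_mem_Icc {X : Type*} [PseudoMetricSpace X] (a b : X) :
    min 1 (dist a b) ∈ Icc (0:ℝ) 1 :=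
  ⟨le_min zero_le_one dist_nonneg, min_le_left _ _⟩

lemma min1_triangle {X : Type*} [PseudoMetricSpace X] (a b c : X) :
    min 1 (dist a c) ≤ min 1 (dist a b) + min 1 (dist b c) := by
  have h1 : (0:ℝ) ≤ min 1 (dist b c) := (min1_mem_Icc _ _).1
  have h2 : (0:ℝ) ≤ min 1 (dist a b) := (min1_mem_Icc _ _).1
  rcases le_total 1 (dist a b) with h | h
  · calc min 1 (dist a c) ≤ 1 := min_le_left _ _
      _ = min 1 (dist a b) := (min_eq_left h).symm
      _ ≤ _ := by linarith
  · rcases le_total 1 (dist b c) with h' | h'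
    · calc min 1 (dist a c) ≤ 1 := min_le_left _ _
        _ = min 1 (dist b c) := (min_eq_left h').symm
        _ ≤ _ := by linarith
    · calc min 1 (dist a c) ≤ dist a c := min_le_right _ _
        _ ≤ dist a b + dist b c := dist_triangle a b c
        _ = min 1 (dist a b) + min 1 (dist b c) := by
            rw [min_eq_right h, min_eq_right h']

lemma integrable_min1 {l : ℕ} (T : ℝ) {u v : ℝ → Vec l}
    (hu : Measurable u) (hv : Measurable v) :
    Integrable (fun t => min 1 (dist (u t) (v t))) (lamMeas T) := by
  have hm : Measurable fun t => min 1 (dist (u t) (v t)) :=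
    measurable_const.min (hu.dist hv)
  refine (integrable_const (1:ℝ)).mono' hm.aestronglyMeasurable (ae_of_all _ fun t => ?_)
  rw [Real.norm_eq_abs, abs_of_nonneg (min1_mem_Icc _ _).1]
  exact min_le_left _ _

lemma exists_approx {l : ℕ} (T : ℝ) {w : ℝ → Vec l} (hw : Measurable w)
    {ε : ℝ} (hε : 0 < ε) :
    ∃ v : BoundedContinuousFunction ℝ (Vec l),
      ∫ t, min 1 (dist (w t) (v t)) ∂(lamMeas T) ≤ ε := by
  set μ := lamMeas T with hμdef
  set s : ℕ → Set ℝ := fun n => {t | (n:ℝ) < ‖w t‖} with hsdef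
  have hsm : ∀ n, MeasurableSet (s n) := fun n =>
    measurableSet_lt measurable_const hw.norm
  have hanti : Antitone s := fun m n hmn t ht => by
    simp only [hsdef, mem_setOf_eq] at ht ⊢
    exact lt_of_le_of_lt (by exact_mod_cast hmn) ht
  have hiInter : ⋂ n, s n = ∅ := by
    ext t
    simp only [mem_iInter, mem_empty_iff_false, iff_false, not_forall]
    obtain ⟨n, hn⟩ := exists_nat_gt ‖w t‖
    exact ⟨n, by simp [hsdef, not_lt.2 hn.le]⟩
  have htend : Tendsto (μ ∘ s) atTop (𝓝 0) := by
    have := tendsto_measure_iInter_atTop (μ := μ)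
      (fun n => (hsm n).nullMeasurableSet) hanti ⟨0, measure_ne_top _ _⟩
    rwa [hiInter, measure_empty] at this
  obtain ⟨N, hN⟩ : ∃ N, μ (s N) < ENNReal.ofReal (ε/2) :=
    (htend.eventually_lt_const (ENNReal.ofReal_pos.2 (by linarith : (0:ℝ) < ε/2))).exists
  set wR : ℝ → Vec l := fun t => if ‖w t‖ ≤ (N:ℝ) then w t else 0 with hwRdef
  have hwRm : Measurable wR :=
    Measurable.ite (measurableSet_le hw.norm measurable_const) hw measurable_const
  have hwRint : Integrable wR μ := by
    refine (integrable_const ((N:ℝ))).mono' hwRm.aestronglyMeasurable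
      (ae_of_all _ fun t => ?_)
    by_cases h : ‖w t‖ ≤ (N:ℝ)
    · simp only [hwRdef, if_pos h]; exact h
    · simp only [hwRdef, if_neg h, norm_zero]; exact_mod_cast N.cast_nonneg
  obtain ⟨v, hv, -⟩ :=
    (memLp_one_iff_integrable.2 hwRint).exists_boundedContinuous_eLpNorm_sub_le
      (by norm_num : (1:ℝ≥0∞) ≠ ∞)
      (ε := ENNReal.ofReal (ε/2)) (ENNReal.ofReal_pos.2 (by linarith)).ne'
  refine ⟨v, ?_⟩
  have hvm : Measurable (⇑v) := v.continuous.measurable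
  have hI1 : Integrable (fun t => min 1 (dist (w t) (wR t))) μ := integrable_min1 T hw hwRm
  have hI2 : Integrable (fun t => min 1 (dist (wR t) (v t))) μ := integrable_min1 T hwRm hvm
  have hI0 : Integrable (fun t => min 1 (dist (w t) (v t))) μ := integrable_min1 T hw hvm
  have step1 : ∫ t, min 1 (dist (w t) (wR t)) ∂μ ≤ ε/2 := by
    have hle : ∀ t, min 1 (dist (w t) (wR t)) ≤ (s N).indicator (fun _ => (1:ℝ)) t := by
      intro t
      by_cases h : t ∈ s N
      · rw [indicator_of_mem h]; exact min_le_left _ _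
      · rw [indicator_of_notMem h]
        have h' : ‖w t‖ ≤ (N:ℝ) := not_lt.1 h
        simp [hwRdef, if_pos h', dist_self]
    calc ∫ t, min 1 (dist (w t) (wR t)) ∂μ
        ≤ ∫ t, (s N).indicator (fun _ => (1:ℝ)) t ∂μ :=
          integral_mono hI1 ((integrable_const 1).indicator (hsm N)) hle
      _ = (μ (s N)).toReal := integral_indicator_one (hsm N)
      _ ≤ ε/2 := ENNReal.toReal_le_of_le_ofReal (by linarith) hN.le
  have step2 : ∫ t, min 1 (dist (wR t) (v t)) ∂μ ≤ ε/2 := by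
    have hi : Integrable (fun t => wR t - v t) μ := hwRint.sub (v.integrable μ)
    have hnorm : ∫ t, ‖wR t - v t‖ ∂μ ≤ ε/2 := by
      have hv' : ENNReal.ofReal (∫ t, ‖wR t - v t‖ ∂μ) ≤ ENNReal.ofReal (ε/2) := by
        rw [ofReal_integral_norm_eq_lintegral_enorm hi]
        rw [eLpNorm_one_eq_lintegral_enorm] at hv
        exact hv
      exact (ENNReal.ofReal_le_ofReal_iff (by linarith)).1 hv'
    calc ∫ t, min 1 (dist (wR t) (v t)) ∂μ
        ≤ ∫ t, ‖wR t - v t‖ ∂μ := by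
          refine integral_mono hI2 hi.norm fun t => ?_
          rw [← dist_eq_norm]
          exact min_le_right _ _
      _ ≤ ε/2 := hnorm
  calc ∫ t, min 1 (dist (w t) (v t)) ∂μ
      ≤ ∫ t, (min 1 (dist (w t) (wR t)) + min 1 (dist (wR t) (v t))) ∂μ :=
        integral_mono hI0 (hI1.add hI2) (fun t => min1_triangle _ _ _)
    _ = (∫ t, min 1 (dist (w t) (wR t)) ∂μ) + ∫ t, min 1 (dist (wR t) (v t)) ∂μ :=
        integral_add hI1 hI2
    _ ≤ ε/2 + ε/2 := add_le_add step1 step2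
    _ = ε := by ring

/-- Lemma 6 of the paper: the pseudo-path (Meyer–Zheng) topology is equivalent to
convergence in measure.  For Borel functions `w_k, w : [0,T] → ℝˡ`, the pseudo-paths
`Ψ(w_k)` converge weakly to `Ψ(w)` (i.e. `∫ φ dΨ(w_k) → ∫ φ dΨ(w)` for every bounded
continuous `φ`) if and only if `w_k → w` in `λ`-measure (i.e. for every `δ > 0`,
`λ { t : |w_k(t) − w(t)| > δ } → 0`). -/
theorem pseudoPath_weak_convergence_iff_convergence_in_measure
    (T : ℝ) (hT : 0 < T) (l : ℕ) (hl : 1 ≤ l)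
    (wk : ℕ → ℝ → Vec l) (w : ℝ → Vec l)
    (hwk : ∀ k, Measurable (wk k)) (hw : Measurable w) :
    ((∀ φ : BoundedContinuousFunction (ℝ × Vec l) ℝ,
        Tendsto (fun k => ∫ p, φ p ∂(pseudoPath T (wk k))) atTop
          (𝓝 (∫ p, φ p ∂(pseudoPath T w)))) ↔
      (∀ δ > (0:ℝ),
        Tendsto (fun k => lamMeas T {t : ℝ | δ < dist (wk k t) (w t)}) atTop (𝓝 0))) := by
  set μ := lamMeas T with hμdef
  constructor
  · -- weak convergence → convergence in measure
    intro h δ hδ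
    set A : ℕ → ℝ := fun k => ∫ t, min 1 (dist (wk k t) (w t)) ∂μ with hAdef
    have hApos : ∀ k, 0 ≤ A k :=
      fun k => integral_nonneg fun t => (min1_mem_Icc _ _).1
    have hA : Tendsto A atTop (𝓝 0) := by
      rw [Metric.tendsto_atTop]
      intro ε hε
      obtain ⟨v, hv⟩ := exists_approx T hw (show (0:ℝ) < ε/4 by linarith)
      set φ : BoundedContinuousFunction (ℝ × Vec l) ℝ :=
        { toFun := fun p => min 1 (dist p.2 (v p.1))
          continuous_toFun :=
            continuous_const.min (continuous_snd.dist (v.continuous.comp continuous_fst))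
          map_bounded' := by
            refine ⟨1, fun p q => ?_⟩
            have hp := min1_mem_Icc p.2 (v p.1)
            have hq := min1_mem_Icc q.2 (v q.1)
            rw [Real.dist_eq]
            exact abs_le.2 ⟨by linarith [hp.1, hp.2, hq.1, hq.2],
              by linarith [hp.1, hp.2, hq.1, hq.2]⟩ }
      have hφw : ∀ u : ℝ → Vec l, ∀ t, φ (t, u t) = min 1 (dist (u t) (v t)) := fun u t => rfl
      have hφtend := h φ
      rw [integral_pseudoPath T hw φ] at hφtend
      have hφtend' : Tendsto (fun k => ∫ t, min 1 (dist (wk k t) (v t)) ∂μ) atTop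
          (𝓝 (∫ t, min 1 (dist (w t) (v t)) ∂μ)) := by
        refine hφtend.congr fun k => ?_
        rw [integral_pseudoPath T (hwk k) φ]
        rfl
      have hev : ∀ᶠ k in atTop,
          ∫ t, min 1 (dist (wk k t) (v t)) ∂μ < ε/4 + ε/4 := by
        have := hφtend'.eventually_lt_const
          (show (∫ t, min 1 (dist (w t) (v t)) ∂μ) < ε/4 + ε/4 by linarith)
        exact this
      rw [eventually_atTop] at hev
      obtain ⟨K, hK⟩ := hev
      refine ⟨K, fun k hk => ?_⟩
      have hbound : A k ≤ (∫ t, min 1 (dist (wk k t) (v t)) ∂μ)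
          + ∫ t, min 1 (dist (w t) (v t)) ∂μ := by
        have hI1 := integrable_min1 T (hwk k) v.continuous.measurable
        have hI2 := integrable_min1 T hw v.continuous.measurable
        have hI2' : Integrable (fun t => min 1 (dist (v t) (w t))) μ := by
          simpa [dist_comm] using hI2
        calc A k ≤ ∫ t, (min 1 (dist (wk k t) (v t)) + min 1 (dist (v t) (w t))) ∂μ :=
              integral_mono (integrable_min1 T (hwk k) hw) (hI1.add hI2')
                (fun t => min1_triangle _ _ _)
          _ = (∫ t, min 1 (dist (wk k t) (v t)) ∂μ) + ∫ t, min 1 (dist (v t) (w t)) ∂μ :=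
              integral_add hI1 hI2'
          _ = _ := by simp [dist_comm]
      have := hK k hk
      rw [Real.dist_0_eq_abs, abs_of_nonneg (hApos k)]
      have h2 : (∫ t, min 1 (dist (w t) (v t)) ∂μ) ≤ ε/4 := hv
      linarith
    -- Markov inequality
    set c : ℝ := min 1 δ with hcdef
    have hc : 0 < c := lt_min one_pos hδ
    have hkey : ∀ k, μ {t : ℝ | δ < dist (wk k t) (w t)} ≤ ENNReal.ofReal (A k / c) := by
      intro k
      have hg : AEMeasurable (fun t => ENNReal.ofReal (min 1 (dist (wk k t) (w t)))) μ :=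
        (ENNReal.measurable_ofReal.comp
          (measurable_const.min ((hwk k).dist hw))).aemeasurable
      have hmar := mul_meas_ge_le_lintegral₀ hg (ENNReal.ofReal c)
      have hsub : {t : ℝ | δ < dist (wk k t) (w t)} ⊆
          {t : ℝ | ENNReal.ofReal c ≤ ENNReal.ofReal (min 1 (dist (wk k t) (w t)))} := by
        intro t ht
        simp only [mem_setOf_eq] at ht ⊢
        exact ENNReal.ofReal_le_ofReal (le_min (min_le_left _ _)
          (le_trans (min_le_right _ _) ht.le))
      have hlint : (∫⁻ t, ENNReal.ofReal (min 1 (dist (wk k t) (w t))) ∂μ)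
          = ENNReal.ofReal (A k) := by
        rw [hAdef]
        exact (ofReal_integral_eq_lintegral_ofReal
          (integrable_min1 T (hwk k) hw)
          (ae_of_all _ fun t => (min1_mem_Icc _ _).1)).symm
      calc μ {t : ℝ | δ < dist (wk k t) (w t)}
          ≤ μ {t : ℝ | ENNReal.ofReal c ≤ ENNReal.ofReal (min 1 (dist (wk k t) (w t)))} :=
            measure_mono hsub
        _ ≤ (∫⁻ t, ENNReal.ofReal (min 1 (dist (wk k t) (w t))) ∂μ) / ENNReal.ofReal c := by
            rw [ENNReal.le_div_iff_mul_le (Or.inl (ENNReal.ofReal_pos.2 hc).ne')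
              (Or.inl ENNReal.ofReal_ne_top), mul_comm]
            exact hmar
        _ = ENNReal.ofReal (A k) / ENNReal.ofReal c := by rw [hlint]
        _ = ENNReal.ofReal (A k / c) := (ENNReal.ofReal_div_of_pos hc).symm
    have hupper : Tendsto (fun k => ENNReal.ofReal (A k / c)) atTop (𝓝 0) := by
      have : Tendsto (fun k => A k / c) atTop (𝓝 0) := by
        simpa using hA.div_const c
      simpa using ENNReal.tendsto_ofReal this
    exact tendsto_of_tendsto_of_tendsto_of_le_of_le tendsto_const_nhds hupper
      (fun k => zero_le) hkey
  · -- convergence in measure → weak convergence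
    intro h φ
    have hTIM : TendstoInMeasure μ wk atTop w := by
      rw [tendstoInMeasure_iff_dist]
      intro ε hε
      refine tendsto_of_tendsto_of_tendsto_of_le_of_le tendsto_const_nhds
        (h (ε/2) (by linarith)) (fun k => zero_le) (fun k => measure_mono ?_)
      intro t ht
      simp only [mem_setOf_eq] at ht ⊢
      linarith
    have hrw : ∀ (u : ℝ → Vec l), Measurable u →
        ∫ p, φ p ∂(pseudoPath T u) = ∫ t, φ (t, u t) ∂μ := fun u hu =>
      integral_pseudoPath T hu φ
    rw [hrw w hw]
    have : (fun k => ∫ p, φ p ∂(pseudoPath T (wk k)))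
        = fun k => ∫ t, φ (t, wk k t) ∂μ := funext fun k => hrw (wk k) (hwk k)
    rw [this]
    apply tendsto_of_subseq_tendsto
    intro ns hns
    have hsub : TendstoInMeasure μ (fun n => wk (ns n)) atTop w :=
      fun ε hε => (hTIM ε hε).comp hns
    obtain ⟨ms, _, hae⟩ := hsub.exists_seq_tendsto_ae
    refine ⟨ms, ?_⟩
    apply tendsto_integral_of_dominated_convergence (fun _ => ‖φ‖)
    · intro n
      exact (φ.continuous.measurable.comp
        (show Measurable fun t : ℝ => (t, wk (ns (ms n)) t) from
          measurable_id.prodMk (hwk _))).aestronglyMeasurable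
    · exact integrable_const _
    · intro n
      exact ae_of_all _ fun t => φ.norm_coe_le_norm _
    · refine hae.mono fun t ht => ?_
      exact (φ.continuous.tendsto _).comp (tendsto_const_nhds.prodMk_nhds ht)
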